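/- Let f : ℝ₊ → [0,∞] be continuous, where [0,∞] carries the topology of the one-point compactification of ℝ₊. Define E(f) = inf{t : f(t) = ∞} and, for x ∈ ℝ₊, S_x(f) = inf{t : f(t) ≥ x} (with inf ∅ = ∞, and where f(t) ≥ x includes f(t) = ∞). Then E(f) = lim_{x→∞} S_x(f), i.e., E(f) = sup_{x ∈ ℝ₊} S_x(f). -/

import Mathlib

open Filter
open scoped ENNReal NNReal

/-- Let `f : ℝ₊ → [0,∞]` be a continuous path into the one-point compactification `[0,∞]`
of `ℝ₊`. With `E(f) = inf {t : f(t) = ∞}` and `S_x(f) = inf {t : f(t) ≥ x}` (both with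
`inf ∅ = ∞`), one has `E(f) = lim_{x→∞} S_x(f) = sup_x S_x(f)`. -/
theorem stmt12 (f : ℝ≥0 → ℝ≥0∞) (hf : Continuous f) :
    (⨅ t ∈ {t : ℝ≥0 | f t = ∞}, (t : ℝ≥0∞)) =
      ⨆ x : ℝ≥0, ⨅ t ∈ {t : ℝ≥0 | (x : ℝ≥0∞) ≤ f t}, (t : ℝ≥0∞) := by
  apply le_antisymm
  · by_contra h
    push_neg at h
    obtain ⟨c, hc1, hc2⟩ := ENNReal.lt_iff_exists_nnreal_btwn.mp h
    have hK : IsCompact (Set.Icc (0:ℝ≥0) c) := isCompact_Icc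
    obtain ⟨t₀, ht₀K, ht₀max⟩ := hK.exists_isMaxOn
      ⟨0, Set.left_mem_Icc.mpr zero_le⟩ hf.continuousOn
    have key : ∀ x : ℝ≥0, (x : ℝ≥0∞) ≤ f t₀ := by
      intro x
      have hx : (⨅ t ∈ {t : ℝ≥0 | (x : ℝ≥0∞) ≤ f t}, (t : ℝ≥0∞)) < c :=
        lt_of_le_of_lt (le_iSup (fun x : ℝ≥0 =>
          ⨅ t ∈ {t : ℝ≥0 | (x : ℝ≥0∞) ≤ f t}, (t : ℝ≥0∞)) x) hc1
      simp only [iInf_lt_iff] at hx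
      obtain ⟨t, ht, htc⟩ := hx
      have htc' : t ≤ c := le_of_lt (by exact_mod_cast htc)
      exact le_trans ht (ht₀max ⟨zero_le, htc'⟩)
    have htop : f t₀ = ∞ := by
      by_contra hne
      have h1 : ((f t₀).toNNReal + 1 : ℝ≥0∞) ≤ f t₀ := by
        exact_mod_cast key ((f t₀).toNNReal + 1)
      rw [ENNReal.coe_toNNReal hne] at h1
      exact absurd h1 (not_le.mpr (ENNReal.lt_add_right hne one_ne_zero))
    have hE : (⨅ t ∈ {t : ℝ≥0 | f t = ∞}, (t : ℝ≥0∞)) ≤ t₀ := iInf₂_le t₀ htop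
    exact absurd (lt_of_le_of_lt (hE.trans (by exact_mod_cast ht₀K.2)) hc2) (lt_irrefl _)
  · exact iSup_le fun x => biInf_mono fun t ht => by
      simp only [Set.mem_setOf_eq] at ht ⊢; rw [ht]; exact le_top
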